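/- If {V^α : α ∈ A} is an arbitrary family of sets, each of which is a finite union of linear subspaces of a vector space, then the intersection ⋂_{α ∈ A} V^α coincides with the intersection of the V^α over some finite subfamily. -/

import Mathlib

open Module

/-- Auxiliary induction on dimension. -/
theorem stmt1_aux (n : ℕ) :
    ∀ {H : Type u} [AddCommGroup H] [Module ℝ H] [FiniteDimensional ℝ H]
      {A : Type v} (V : A → Set H), Module.finrank ℝ H ≤ n →
      (∀ a : A, ∃ 𝒳 : Finset (Submodule ℝ H), V a = ⋃ U ∈ 𝒳, (U : Set H)) →
      ∃ s : Finset A, (⋂ a : A, V a) = ⋂ a ∈ s, V a := by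
  induction n with
  | zero =>
    intro H _ _ _ A V hn _
    have hsub : Subsingleton H := by
      rw [← Module.finrank_zero_iff (R := ℝ)]
      omega
    by_cases hall : ∀ a, V a = Set.univ
    · exact ⟨∅, by simp [hall]⟩
    · push_neg at hall
      obtain ⟨a₀, ha₀⟩ := hall
      have hempty : V a₀ = ∅ := by
        rcases Set.eq_empty_or_nonempty (V a₀) with h | ⟨x, hx⟩
        · exact h
        · exact absurd (Set.eq_univ_of_forall fun y => by
            rwa [Subsingleton.elim y x]) ha₀
      refine ⟨{a₀}, ?_⟩
      have h1 : (⋂ a : A, V a) ⊆ V a₀ := Set.iInter_subset V a₀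
      simp only [Finset.mem_singleton, Set.iInter_iInter_eq_left]
      rw [hempty] at h1 ⊢
      exact Set.eq_empty_of_subset_empty h1
  | succ n ih =>
    intro H _ _ _ A V hn hV
    classical
    by_cases hall : ∀ a, V a = Set.univ
    · exact ⟨∅, by simp [hall]⟩
    · push_neg at hall
      obtain ⟨a₀, ha₀⟩ := hall
      obtain ⟨𝒳, h𝒳⟩ := hV a₀
      -- every member of 𝒳 is a proper subspace
      have hproper : ∀ W ∈ 𝒳, W ≠ ⊤ := by
        intro W hW hTop
        apply ha₀
        apply Set.eq_univ_of_univ_subset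
        have : (W : Set H) ⊆ V a₀ := by
          rw [h𝒳]; exact Set.subset_biUnion_of_mem hW
        rwa [hTop, Submodule.top_coe] at this
      have hrank : ∀ W ∈ 𝒳, Module.finrank ℝ W ≤ n := by
        intro W hW
        have := Submodule.finrank_lt (K := ℝ) (V := H) (hproper W hW)
        omega
      -- apply IH inside each W ∈ 𝒳
      have key : ∀ W ∈ 𝒳, ∃ t : Finset A,
          ∀ x : H, x ∈ W → (∀ a ∈ t, x ∈ V a) → ∀ a, x ∈ V a := by
        intro W hW
        have hV' : ∀ a : A, ∃ 𝒴 : Finset (Submodule ℝ W),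
            (Subtype.val ⁻¹' V a : Set W) = ⋃ U ∈ 𝒴, (U : Set W) := by
          intro a
          obtain ⟨𝒵, h𝒵⟩ := hV a
          refine ⟨𝒵.image (Submodule.comap W.subtype), ?_⟩
          ext x
          simp only [h𝒵, Set.mem_preimage, Set.mem_iUnion, Finset.mem_image,
            SetLike.mem_coe, Submodule.mem_comap, Submodule.subtype_apply]
          constructor
          · rintro ⟨U, hU, hxU⟩
            exact ⟨Submodule.comap W.subtype U, ⟨U, hU, rfl⟩, by
              simpa [Submodule.mem_comap] using hxU⟩
          · rintro ⟨U', ⟨U, hU, rfl⟩, hxU⟩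
            exact ⟨U, hU, by simpa [Submodule.mem_comap] using hxU⟩
        obtain ⟨t, ht⟩ := ih (fun a => (Subtype.val ⁻¹' V a : Set W))
          (hrank W hW) hV'
        refine ⟨t, fun x hx hxt a => ?_⟩
        have hmem : (⟨x, hx⟩ : W) ∈ ⋂ a ∈ t, (Subtype.val ⁻¹' V a : Set W) := by
          simp only [Set.mem_iInter, Set.mem_preimage]
          exact fun a ha => hxt a ha
        rw [← ht] at hmem
        exact Set.mem_iInter.1 hmem a
      choose t ht using key
      refine ⟨insert a₀ (𝒳.attach.biUnion fun W => t W.1 W.2), ?_⟩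
      ext x
      simp only [Set.mem_iInter]
      constructor
      · intro hx a _
        exact hx a
      · intro hx
        have hxa₀ : x ∈ V a₀ := hx a₀ (Finset.mem_insert_self _ _)
        rw [h𝒳] at hxa₀
        simp only [Set.mem_iUnion, SetLike.mem_coe] at hxa₀
        obtain ⟨W, hW, hxW⟩ := hxa₀
        refine ht W hW x hxW fun a ha => ?_
        refine hx a (Finset.mem_insert_of_mem ?_)
        exact Finset.mem_biUnion.2 ⟨⟨W, hW⟩, Finset.mem_attach _ _, ha⟩

/-- An arbitrary intersection of finite unions of linear subspaces coincides with
the intersection over some finite subfamily. -/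
theorem stmt1 {H : Type*} [AddCommGroup H] [Module ℝ H] [FiniteDimensional ℝ H]
    {A : Type*} (V : A → Set H)
    (hV : ∀ a : A, ∃ 𝒳 : Finset (Submodule ℝ H), V a = ⋃ U ∈ 𝒳, (U : Set H)) :
    ∃ s : Finset A, (⋂ a : A, V a) = ⋂ a ∈ s, V a :=
  stmt1_aux (Module.finrank ℝ H) V le_rfl hV
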